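/- A finite binary tree t is uniquely determined by the set Dyad(t): if Dyad(t) = Dyad(t') then t = t'. -/

import Mathlib

/-- Finite binary trees. -/
inductive PTree
  | leaf : PTree
  | node : PTree → PTree → PTree
deriving DecidableEq

/-- The finite set of dyadic rationals attached to a tree: `Dyad(•) = {0,1}` and
`Dyad(t₁t₂)` is `Dyad(t₁)` contracted to `[0,1/2]` union `Dyad(t₂)` contracted to
`[1/2,1]`. -/
def PTree.dyad : PTree → Finset ℚ
  | .leaf => {0, 1}
  | .node t₁ t₂ =>
      (t₁.dyad.image (fun x => x / 2)) ∪ (t₂.dyad.image (fun x => 1 / 2 + x / 2))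

lemma PTree.dyad_bounds : ∀ (t : PTree) (x : ℚ), x ∈ t.dyad → 0 ≤ x ∧ x ≤ 1 := by
  intro t
  induction t with
  | leaf => intro x hx; simp [PTree.dyad] at hx; rcases hx with h | h <;> simp [h]
  | node a b iha ihb =>
      intro x hx
      simp [PTree.dyad] at hx
      rcases hx with ⟨y, hy, rfl⟩ | ⟨y, hy, rfl⟩
      · obtain ⟨h0, h1⟩ := iha y hy; constructor <;> linarith
      · obtain ⟨h0, h1⟩ := ihb y hy; constructor <;> linarith

lemma PTree.zero_mem_dyad : ∀ (t : PTree), (0 : ℚ) ∈ t.dyad := by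
  intro t
  induction t with
  | leaf => simp [PTree.dyad]
  | node a b iha ihb =>
      simp only [PTree.dyad, Finset.mem_union, Finset.mem_image]
      exact Or.inl ⟨0, iha, by norm_num⟩

lemma PTree.one_mem_dyad : ∀ (t : PTree), (1 : ℚ) ∈ t.dyad := by
  intro t
  induction t with
  | leaf => simp [PTree.dyad]
  | node a b iha ihb =>
      simp only [PTree.dyad, Finset.mem_union, Finset.mem_image]
      exact Or.inr ⟨1, ihb, by norm_num⟩

lemma PTree.half_mem_node (a b : PTree) : (1/2 : ℚ) ∈ (PTree.node a b).dyad := by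
  simp only [PTree.dyad, Finset.mem_union, Finset.mem_image]
  exact Or.inl ⟨1, PTree.one_mem_dyad a, by norm_num⟩

lemma PTree.filter_left (a b : PTree) :
    (PTree.node a b).dyad.filter (fun x => x ≤ 1/2) = a.dyad.image (fun x => x / 2) := by
  ext x
  simp only [Finset.mem_filter, PTree.dyad, Finset.mem_union, Finset.mem_image]
  constructor
  · rintro ⟨h | ⟨y, hy, rfl⟩, hle⟩
    · exact h
    · obtain ⟨h0, h1⟩ := PTree.dyad_bounds b y hy
      have : y = 0 := by linarith
      subst this
      exact ⟨1, PTree.one_mem_dyad a, by norm_num⟩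
  · rintro ⟨y, hy, rfl⟩
    obtain ⟨h0, h1⟩ := PTree.dyad_bounds a y hy
    exact ⟨Or.inl ⟨y, hy, rfl⟩, by linarith⟩

lemma PTree.filter_right (a b : PTree) :
    (PTree.node a b).dyad.filter (fun x => 1/2 ≤ x) = b.dyad.image (fun x => 1/2 + x / 2) := by
  ext x
  simp only [Finset.mem_filter, PTree.dyad, Finset.mem_union, Finset.mem_image]
  constructor
  · rintro ⟨⟨y, hy, rfl⟩ | h, hle⟩
    · obtain ⟨h0, h1⟩ := PTree.dyad_bounds a y hy
      have : y = 1 := by linarith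
      subst this
      exact ⟨0, PTree.zero_mem_dyad b, by norm_num⟩
    · exact h
  · rintro ⟨y, hy, rfl⟩
    obtain ⟨h0, h1⟩ := PTree.dyad_bounds b y hy
    refine ⟨Or.inr ⟨y, hy, by norm_num⟩, by linarith⟩

/-- A finite binary tree is uniquely determined by the set `Dyad(t)`. -/
theorem ptree_dyad_injective (t t' : PTree) (h : t.dyad = t'.dyad) : t = t' := by
  induction t generalizing t' with
  | leaf =>
      cases t' with
      | leaf => rfl
      | node a b =>
          exfalso
          have := PTree.half_mem_node a b
          rw [← h] at this
          simp [PTree.dyad] at this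
  | node a b iha ihb =>
      cases t' with
      | leaf =>
          exfalso
          have := PTree.half_mem_node a b
          rw [h] at this
          simp [PTree.dyad] at this
      | node a' b' =>
          have hinj2 : Function.Injective (fun x : ℚ => x / 2) := by
            intro x y hxy; simpa using (by field_simp at hxy; exact hxy)
          have hinj3 : Function.Injective (fun x : ℚ => 1/2 + x / 2) := by
            intro x y hxy; simp only at hxy; field_simp at hxy; linarith
          have hl : a.dyad = a'.dyad := by
            have := congrArg (Finset.filter (fun x => x ≤ 1/2)) h
            rw [PTree.filter_left, PTree.filter_left] at this
            exact Finset.image_injective hinj2 this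
          have hr : b.dyad = b'.dyad := by
            have := congrArg (Finset.filter (fun x => 1/2 ≤ x)) h
            rw [PTree.filter_right, PTree.filter_right] at this
            exact Finset.image_injective hinj3 this
          rw [iha a' hl, ihb b' hr]
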